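/- Let A be an n×n hidden Z-matrix. If there exists a vector x > 0 such that Ax ≥ 0, then every principal submatrix A_{ββ} of A (for β a nonempty subset of indices) is itself a hidden Z-matrix, and moreover there exists a vector y > 0 with A_{ββ} y ≥ 0. -/

import Mathlib

open Matrix

/-- A Z-matrix: all off-diagonal entries are nonpositive. -/
def IsZMatrix {ι : Type*} [Fintype ι] [DecidableEq ι] (A : Matrix ι ι ℝ) : Prop :=
  ∀ i j, i ≠ j → A i j ≤ 0

/-- A hidden Z-matrix: AX = Y for Z-matrices X, Y, with rᵀX + sᵀY > 0 for some r, s ≥ 0. -/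
def IsHiddenZ {ι : Type*} [Fintype ι] [DecidableEq ι] (A : Matrix ι ι ℝ) : Prop :=
  ∃ X Y : Matrix ι ι ℝ, ∃ r s : ι → ℝ,
    IsZMatrix X ∧ IsZMatrix Y ∧ A * X = Y ∧
    (∀ i, 0 ≤ r i) ∧ (∀ i, 0 ≤ s i) ∧
    (∀ j, 0 < (Matrix.vecMul r X + Matrix.vecMul s Y) j)

/-- The principal minor of `A` indexed by `α`. -/
def principalMinor {ι : Type*} [Fintype ι] [DecidableEq ι] (A : Matrix ι ι ℝ)
    (α : Finset ι) : ℝ :=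
  (A.submatrix (fun i : {x // x ∈ α} => (i : ι)) (fun j : {x // x ∈ α} => (j : ι))).det


open Matrix Finset

set_option linter.unusedSectionVars false
section helpers
variable {ι κ γ : Type*} [Fintype ι] [DecidableEq ι] [Fintype κ] [DecidableEq κ]
  [Fintype γ] [DecidableEq γ]

lemma hz_mulVec_nonpos {P : Matrix ι κ ℝ} {v : κ → ℝ} (hP : ∀ i j, P i j ≤ 0)
    (hv : ∀ j, 0 ≤ v j) : ∀ i, (P *ᵥ v) i ≤ 0 := by
  intro i
  apply Finset.sum_nonpos
  intro j _
  exact mul_nonpos_iff.mpr (Or.inr ⟨hP i j, hv j⟩)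

lemma hz_mulVec_nonneg {N : Matrix ι κ ℝ} {v : κ → ℝ} (hN : ∀ i j, 0 ≤ N i j)
    (hv : ∀ j, 0 ≤ v j) : ∀ i, 0 ≤ (N *ᵥ v) i := by
  intro i
  apply Finset.sum_nonneg
  intro j _
  exact mul_nonneg (hN i j) (hv j)

lemma hz_mul_nonpos {P : Matrix ι κ ℝ} {Q : Matrix κ γ ℝ} (hP : ∀ i j, P i j ≤ 0)
    (hQ : ∀ i j, 0 ≤ Q i j) : ∀ i j, (P * Q) i j ≤ 0 := by
  intro i j
  rw [Matrix.mul_apply]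
  apply Finset.sum_nonpos
  intro k _
  exact mul_nonpos_iff.mpr (Or.inr ⟨hP i k, hQ k j⟩)

lemma hz_mul_nonneg2 {P : Matrix ι κ ℝ} {Q : Matrix κ γ ℝ} (hP : ∀ i j, P i j ≤ 0)
    (hQ : ∀ i j, Q i j ≤ 0) : ∀ i j, 0 ≤ (P * Q) i j := by
  intro i j
  rw [Matrix.mul_apply]
  apply Finset.sum_nonneg
  intro k _
  have := mul_nonneg (neg_nonneg.2 (hP i k)) (neg_nonneg.2 (hQ k j))
  simpa using this

/-- The key sign lemma: with Z-matrix witnesses and the positivity condition,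
any `z` with `Xz ≥ 0` and `Yz ≥ 0` is nonnegative. -/
lemma hz_sign_lemma (X Y : Matrix ι ι ℝ) (hXZ : IsZMatrix X) (hYZ : IsZMatrix Y)
    (r s : ι → ℝ) (hr : ∀ i, 0 ≤ r i) (hs : ∀ i, 0 ≤ s i)
    (hpos : ∀ j, 0 < (Matrix.vecMul r X + Matrix.vecMul s Y) j)
    (z : ι → ℝ) (hXz : ∀ i, 0 ≤ (X *ᵥ z) i) (hYz : ∀ i, 0 ≤ (Y *ᵥ z) i) :
    ∀ i, 0 ≤ z i := by
  by_contra hcon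
  push_neg at hcon
  obtain ⟨i0, hi0⟩ := hcon
  set w : ι → ℝ := fun i => max (-z i) 0 with hwdef
  have hw0 : ∀ i, 0 ≤ w i := fun i => le_max_right _ _
  have hwi0 : 0 < w i0 := by
    simp only [hwdef]
    exact lt_max_iff.mpr (Or.inl (by linarith))
  have key : ∀ (M : Matrix ι ι ℝ), IsZMatrix M → (∀ i, 0 ≤ (M *ᵥ z) i) →
      ∀ i, (M *ᵥ w) i ≤ 0 := by
    intro M hM hMz i
    by_cases hzi : z i < 0
    · have hsplit : ∀ j, w j = -z j + max (z j) 0 := by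
        intro j
        rcases le_or_gt 0 (z j) with h | h
        · simp [hwdef, max_eq_right, h, max_eq_left, neg_nonpos.2 h]
        · simp [hwdef, max_eq_left (by linarith : -z j ≥ 0).le, max_eq_right (le_of_lt h)]
      have : (M *ᵥ w) i = -((M *ᵥ z) i) + ∑ j, M i j * max (z j) 0 := by
        simp only [Matrix.mulVec, dotProduct]
        rw [← Finset.sum_neg_distrib, ← Finset.sum_add_distrib]
        congr 1; funext j
        rw [hsplit j]; ring
      rw [this]
      have h2 : ∑ j, M i j * max (z j) 0 ≤ 0 := by
        apply Finset.sum_nonpos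
        intro j _
        by_cases hji : j = i
        · subst hji
          have : max (z j) 0 = 0 := max_eq_right (le_of_lt hzi)
          simp [this]
        · exact mul_nonpos_iff.mpr (Or.inr ⟨hM i j (Ne.symm hji), le_max_right _ _⟩)
      linarith [hMz i]
    · have hwi : w i = 0 := by
        simp only [hwdef]
        exact max_eq_right (by linarith)
      simp only [Matrix.mulVec, dotProduct]
      apply Finset.sum_nonpos
      intro j _
      by_cases hji : j = i
      · subst hji; simp [hwi]
      · exact mul_nonpos_iff.mpr (Or.inr ⟨hM i j (Ne.symm hji), hw0 j⟩)
  have hXw := key X hXZ hXz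
  have hYw := key Y hYZ hYz
  have h1 : 0 < (Matrix.vecMul r X + Matrix.vecMul s Y) ⬝ᵥ w := by
    rw [dotProduct]
    apply Finset.sum_pos'
    · intro j _; exact mul_nonneg (hpos j).le (hw0 j)
    · exact ⟨i0, Finset.mem_univ _, mul_pos (hpos i0) hwi0⟩
  have h2 : (Matrix.vecMul r X + Matrix.vecMul s Y) ⬝ᵥ w
      = r ⬝ᵥ (X *ᵥ w) + s ⬝ᵥ (Y *ᵥ w) := by
    rw [add_dotProduct, Matrix.dotProduct_mulVec, Matrix.dotProduct_mulVec]
  have h3 : r ⬝ᵥ (X *ᵥ w) ≤ 0 := by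
    rw [dotProduct]
    exact Finset.sum_nonpos fun i _ => mul_nonpos_iff.mpr (Or.inl ⟨hr i, hXw i⟩)
  have h4 : s ⬝ᵥ (Y *ᵥ w) ≤ 0 := by
    rw [dotProduct]
    exact Finset.sum_nonpos fun i _ => mul_nonpos_iff.mpr (Or.inl ⟨hs i, hYw i⟩)
  linarith

end helpers
section mpart
variable {ι : Type*} [Fintype ι] [DecidableEq ι]

lemma hz_bump (W : Matrix ι ι ℝ) (u : ι → ℝ) (hu : ∀ i, 0 ≤ u i)
    (hWu : ∀ i, 0 < (W *ᵥ u) i) :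
    ∃ u' : ι → ℝ, (∀ i, 0 < u' i) ∧ (∀ i, 0 < (W *ᵥ u') i) := by
  rcases isEmpty_or_nonempty ι with h | h
  · exact ⟨fun _ => 1, fun i => h.elim i, fun i => h.elim i⟩
  · set m := Finset.univ.inf' Finset.univ_nonempty (fun i => (W *ᵥ u) i) with hm
    have hm0 : 0 < m := by
      rw [hm, Finset.lt_inf'_iff]
      exact fun i _ => hWu i
    set S : ℝ := ∑ i, ∑ j, |W i j| with hS
    have hS0 : 0 ≤ S :=
      Finset.sum_nonneg fun i _ => Finset.sum_nonneg fun j _ => abs_nonneg _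
    set ε : ℝ := m / (S + 1) with hε
    have hε0 : 0 < ε := div_pos hm0 (by linarith)
    refine ⟨fun i => u i + ε, fun i => by have := hu i; simp; linarith, ?_⟩
    intro i
    have hrow : -S ≤ ∑ j, W i j := by
      have h1 : ∑ j, |W i j| ≤ S := by
        rw [hS]
        exact Finset.single_le_sum
          (fun k (_ : k ∈ Finset.univ) =>
            Finset.sum_nonneg fun j _ => abs_nonneg (W k j)) (Finset.mem_univ i)
      have h2 : -∑ j, |W i j| ≤ ∑ j, W i j := by
        rw [← Finset.sum_neg_distrib]
        exact Finset.sum_le_sum fun j _ => neg_abs_le _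
      linarith
    have hexp : (W *ᵥ fun j => u j + ε) i = (W *ᵥ u) i + ε * ∑ j, W i j := by
      simp only [Matrix.mulVec, dotProduct]
      rw [Finset.mul_sum, ← Finset.sum_add_distrib]
      congr 1; funext j; ring
    rw [hexp]
    have h3 : m ≤ (W *ᵥ u) i := by
      rw [hm]
      exact Finset.inf'_le _ (Finset.mem_univ i)
    have h4 : ε * ∑ j, W i j ≥ -(ε * S) := by
      have := mul_le_mul_of_nonneg_left hrow hε0.le
      rw [mul_neg] at this
      linarith
    have h5 : ε * S < m := by
      have : ε * (S + 1) = m := div_mul_cancel₀ m (by linarith)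
      nlinarith
    linarith

lemma hz_solve_nonneg (W : Matrix ι ι ℝ) (hW : IsZMatrix W) (u : ι → ℝ)
    (hu : ∀ i, 0 < u i) (hWu : ∀ i, 0 < (W *ᵥ u) i)
    (v b : ι → ℝ) (hb : ∀ i, 0 ≤ b i) (hWv : W *ᵥ v = b) : ∀ i, 0 ≤ v i := by
  rcases isEmpty_or_nonempty ι with h | h
  · exact fun i => h.elim i
  · obtain ⟨j0, _, hmin⟩ := Finset.exists_min_image Finset.univ
      (fun j => v j / u j) Finset.univ_nonempty
    set t := v j0 / u j0 with ht
    rcases le_or_gt 0 t with hta | htb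
    · intro i
      have h1 : t ≤ v i / u i := hmin i (Finset.mem_univ i)
      have h2 : 0 ≤ v i / u i := le_trans hta h1
      have := mul_nonneg h2 (hu i).le
      rwa [div_mul_cancel₀ _ (hu i).ne'] at this
    · exfalso
      have hvj0 : v j0 = t * u j0 := by
        rw [ht, div_mul_cancel₀ _ (hu j0).ne']
      have hterm : ∀ j, W j0 j * v j ≤ (W j0 j * u j) * t := by
        intro j
        by_cases hj : j = j0
        · subst hj; rw [hvj0]; ring_nf; exact le_refl _
        · have hWj : W j0 j ≤ 0 := hW j0 j (Ne.symm hj)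
          have hvj : t * u j ≤ v j := by
            have h1 : t ≤ v j / u j := hmin j (Finset.mem_univ j)
            have := mul_le_mul_of_nonneg_right h1 (hu j).le
            rwa [div_mul_cancel₀ _ (hu j).ne'] at this
          calc W j0 j * v j ≤ W j0 j * (t * u j) :=
                mul_le_mul_of_nonpos_left hvj hWj
            _ = (W j0 j * u j) * t := by ring
      have hsum : b j0 ≤ (W *ᵥ u) j0 * t := by
        have h1 : b j0 = ∑ j, W j0 j * v j := by
          rw [← hWv]; rfl
        have h2 : ∑ j, W j0 j * v j ≤ ∑ j, (W j0 j * u j) * t :=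
          Finset.sum_le_sum fun j _ => hterm j
        have h3 : ∑ j, (W j0 j * u j) * t = (W *ᵥ u) j0 * t := by
          simp only [Matrix.mulVec, dotProduct]
          rw [Finset.sum_mul]
        linarith
      have : (W *ᵥ u) j0 * t < 0 := mul_neg_of_pos_of_neg (hWu j0) htb
      linarith [hb j0]

lemma hz_M_inverse (W : Matrix ι ι ℝ) (hW : IsZMatrix W) (u : ι → ℝ)
    (hu : ∀ i, 0 ≤ u i) (hWu : ∀ i, 0 < (W *ᵥ u) i) :
    IsUnit W.det ∧ (∀ i j, 0 ≤ W⁻¹ i j) := by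
  obtain ⟨u', hu', hWu'⟩ := hz_bump W u hu hWu
  have hsolve := hz_solve_nonneg W hW u' hu' hWu'
  have hinj : Function.Injective W.mulVec := by
    intro a b hab
    have hd0 : W *ᵥ (a - b) = 0 := by rw [Matrix.mulVec_sub, hab, sub_self]
    have hd0' : W *ᵥ (b - a) = 0 := by rw [Matrix.mulVec_sub, hab, sub_self]
    have h1 := hsolve (a - b) 0 (fun i => le_refl 0) hd0
    have h2 := hsolve (b - a) 0 (fun i => le_refl 0) hd0'
    funext i
    have := h1 i; have := h2 i
    simp only [Pi.sub_apply] at *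
    linarith
  have hunit : IsUnit W := Matrix.mulVec_injective_iff_isUnit.mp hinj
  have hdet : IsUnit W.det := (Matrix.isUnit_iff_isUnit_det W).mp hunit
  refine ⟨hdet, ?_⟩
  intro i j
  have hmul : W * W⁻¹ = 1 := Matrix.mul_nonsing_inv W hdet
  have hcol : W *ᵥ (fun k => W⁻¹ k j) = fun i => (1 : Matrix ι ι ℝ) i j := by
    funext i'
    simp only [Matrix.mulVec, dotProduct]
    rw [← Matrix.mul_apply, hmul]
  have hbnn : ∀ i', 0 ≤ (1 : Matrix ι ι ℝ) i' j := by
    intro i'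
    by_cases h : i' = j <;> simp [Matrix.one_apply, h]
  exact hsolve (fun k => W⁻¹ k j) _ hbnn hcol i

end mpart
theorem hiddenZ_principal_submatrix {n : ℕ} (A : Matrix (Fin n) (Fin n) ℝ)
    (hA : IsHiddenZ A) (x : Fin n → ℝ) (hx : ∀ i, 0 < x i)
    (hAx : ∀ i, 0 ≤ A.mulVec x i) :
    ∀ β : Finset (Fin n), β.Nonempty →
      IsHiddenZ (A.submatrix (fun i : {x // x ∈ β} => (i : Fin n))
          (fun j : {x // x ∈ β} => (j : Fin n))) ∧
      ∃ y : {x // x ∈ β} → ℝ, (∀ i, 0 < y i) ∧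
        ∀ i, 0 ≤ (A.submatrix (fun i : {x // x ∈ β} => (i : Fin n))
          (fun j : {x // x ∈ β} => (j : Fin n))).mulVec y i := by
  classical
  obtain ⟨X, Y, r, s, hXZ, hYZ, hAXY, hr, hs, hpos⟩ := hA
  have hYmv : ∀ v, Y *ᵥ v = A *ᵥ (X *ᵥ v) := by
    intro v; rw [← hAXY, Matrix.mulVec_mulVec]
  -- X has trivial kernel
  have hinj : Function.Injective X.mulVec := by
    intro a b hab
    have hd : X *ᵥ (a - b) = 0 := by rw [Matrix.mulVec_sub, hab, sub_self]
    have hd' : X *ᵥ (b - a) = 0 := by rw [Matrix.mulVec_sub, hab, sub_self]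
    have hYd : Y *ᵥ (a - b) = 0 := by rw [hYmv, hd, Matrix.mulVec_zero]
    have hYd' : Y *ᵥ (b - a) = 0 := by rw [hYmv, hd', Matrix.mulVec_zero]
    have h1 := hz_sign_lemma X Y hXZ hYZ r s hr hs hpos (a - b)
      (fun i => by simp [hd]) (fun i => by simp [hYd])
    have h2 := hz_sign_lemma X Y hXZ hYZ r s hr hs hpos (b - a)
      (fun i => by simp [hd']) (fun i => by simp [hYd'])
    funext i
    have ha1 := h1 i; have ha2 := h2 i
    simp only [Pi.sub_apply] at ha1 ha2
    linarith
  have hXdet : IsUnit X.det :=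
    (Matrix.isUnit_iff_isUnit_det X).mp (Matrix.mulVec_injective_iff_isUnit.mp hinj)
  set z : Fin n → ℝ := X⁻¹ *ᵥ x with hzdef
  have hXz : X *ᵥ z = x := by
    rw [hzdef, Matrix.mulVec_mulVec, Matrix.mul_nonsing_inv X hXdet, Matrix.one_mulVec]
  have hYz : Y *ᵥ z = A *ᵥ x := by rw [hYmv, hXz]
  have hznn : ∀ i, 0 ≤ z i := hz_sign_lemma X Y hXZ hYZ r s hr hs hpos z
    (fun i => by rw [hXz]; exact (hx i).le) (fun i => by rw [hYz]; exact hAx i)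
  intro β _hβ
  set c : {x : Fin n // x ∈ β} → Fin n := fun i => (i : Fin n) with hc
  set c' : {x : Fin n // ¬ x ∈ β} → Fin n := fun i => (i : Fin n) with hc'
  set e : {x : Fin n // x ∈ β} ⊕ {x : Fin n // ¬ x ∈ β} ≃ Fin n :=
    Equiv.sumCompl (fun x => x ∈ β) with he
  have hsub : ∀ M : Matrix (Fin n) (Fin n) ℝ,
      M.submatrix e e = Matrix.fromBlocks (M.submatrix c c) (M.submatrix c c')
        (M.submatrix c' c) (M.submatrix c' c') := by
    intro M
    ext i j
    rcases i with i | i <;> rcases j with j | j <;> rfl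
  have hcomp : ∀ v : Fin n → ℝ, v ∘ e = Sum.elim (v ∘ c) (v ∘ c') := by
    intro v; funext k; rcases k with k | k <;> rfl
  set B := A.submatrix c c with hB
  set Q := A.submatrix c c' with hQ
  set X11 := X.submatrix c c with hX11
  set X12 := X.submatrix c c' with hX12
  set X21 := X.submatrix c' c with hX21
  set X22 := X.submatrix c' c' with hX22
  set Y11 := Y.submatrix c c with hY11
  set Y12 := Y.submatrix c c' with hY12
  -- block equations
  have hprod : A.submatrix e e * X.submatrix e e = Y.submatrix e e := by
    rw [Matrix.submatrix_mul_equiv, hAXY]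
  rw [hsub A, hsub X, hsub Y, Matrix.fromBlocks_multiply] at hprod
  have E11 := congrArg Matrix.toBlocks₁₁ hprod
  have E12 := congrArg Matrix.toBlocks₁₂ hprod
  simp only [Matrix.toBlocks_fromBlocks₁₁, Matrix.toBlocks_fromBlocks₁₂] at E11 E12
  -- vector equations
  have hvec : ∀ (M : Matrix (Fin n) (Fin n) ℝ) (v : Fin n → ℝ),
      M.submatrix e e *ᵥ (v ∘ e) = (M *ᵥ v) ∘ e := by
    intro M v
    rw [Matrix.submatrix_mulVec_equiv]
    have hvv : (v ∘ e) ∘ e.symm = v := by funext k; simp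
    rw [hvv]
  have hXvec := hvec X z
  rw [hsub X, hcomp z, Matrix.fromBlocks_mulVec] at hXvec
  simp only [Sum.elim_comp_inl, Sum.elim_comp_inr] at hXvec
  have hYvec := hvec Y z
  rw [hsub Y, hcomp z, Matrix.fromBlocks_mulVec] at hYvec
  simp only [Sum.elim_comp_inl, Sum.elim_comp_inr] at hYvec
  have V1 : X11 *ᵥ (z ∘ c) + X12 *ᵥ (z ∘ c') = x ∘ c := by
    funext i
    have h := congrFun hXvec (Sum.inl i)
    simp [hXz] at h; exact h
  have V2 : X21 *ᵥ (z ∘ c) + X22 *ᵥ (z ∘ c') = x ∘ c' := by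
    funext i
    have h := congrFun hXvec (Sum.inr i)
    simp [hXz] at h; exact h
  have V1Y : Y11 *ᵥ (z ∘ c) + Y12 *ᵥ (z ∘ c') = (A *ᵥ x) ∘ c := by
    funext i
    have h := congrFun hYvec (Sum.inl i)
    simp [hYz] at h; exact h
  -- sign facts for blocks
  have hX12np : ∀ i j, X12 i j ≤ 0 := by
    intro i j
    exact hXZ (c i) (c' j) (fun h => j.2 (Eq.mp (congrArg (· ∈ β) h) i.2))
  have hX21np : ∀ i j, X21 i j ≤ 0 := by
    intro i j
    exact hXZ (c' i) (c j) (fun h => i.2 (Eq.mp (congrArg (· ∈ β) h.symm) j.2))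
  have hY12np : ∀ i j, Y12 i j ≤ 0 := by
    intro i j
    exact hYZ (c i) (c' j) (fun h => j.2 (Eq.mp (congrArg (· ∈ β) h) i.2))
  have hX22Z : IsZMatrix X22 := by
    intro i j hij
    exact hXZ (c' i) (c' j) (fun h => hij (Subtype.ext h))
  have hX11Z : IsZMatrix X11 := by
    intro i j hij
    exact hXZ (c i) (c j) (fun h => hij (Subtype.ext h))
  have hY11Z : IsZMatrix Y11 := by
    intro i j hij
    exact hYZ (c i) (c j) (fun h => hij (Subtype.ext h))
  -- X22 is an M-matrix
  have hz2nn : ∀ i, 0 ≤ (z ∘ c') i := fun i => hznn _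
  have hz1nn : ∀ i, 0 ≤ (z ∘ c) i := fun i => hznn _
  have hX22z2 : ∀ i, 0 < (X22 *ᵥ (z ∘ c')) i := by
    intro i
    have h := congrFun V2 i
    simp only [Pi.add_apply] at h
    have h1 : (X21 *ᵥ (z ∘ c)) i ≤ 0 := hz_mulVec_nonpos hX21np hz1nn i
    have h2 : 0 < x (c' i) := hx _
    have : (x ∘ c') i = x (c' i) := rfl
    linarith
  obtain ⟨hWdet, hNnn⟩ := hz_M_inverse X22 hX22Z (z ∘ c') hz2nn hX22z2
  set N := X22⁻¹ with hNdef
  have hWN : X22 * N = 1 := Matrix.mul_nonsing_inv _ hWdet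
  have hNW : N * X22 = 1 := Matrix.nonsing_inv_mul _ hWdet
  -- Schur-type witnesses
  set X' := X11 - X12 * (N * X21) with hX'def
  set Y' := Y11 - Y12 * (N * X21) with hY'def
  have hNX21np : ∀ i j, (N * X21) i j ≤ 0 := by
    intro i j
    rw [Matrix.mul_apply]
    apply Finset.sum_nonpos
    intro k _
    exact mul_nonpos_iff.mpr (Or.inl ⟨hNnn i k, hX21np k j⟩)
  have hX12Nnn : ∀ i j, 0 ≤ (X12 * (N * X21)) i j := hz_mul_nonneg2 hX12np hNX21np
  have hY12Nnn : ∀ i j, 0 ≤ (Y12 * (N * X21)) i j := hz_mul_nonneg2 hY12np hNX21np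
  have hX'Z : IsZMatrix X' := by
    intro i j hij
    rw [hX'def, Matrix.sub_apply]
    have h1 := hX11Z i j hij
    have h2 := hX12Nnn i j
    linarith
  have hY'Z : IsZMatrix Y' := by
    intro i j hij
    rw [hY'def, Matrix.sub_apply]
    have h1 := hY11Z i j hij
    have h2 := hY12Nnn i j
    linarith
  -- B * X' = Y'
  have hBX' : B * X' = Y' := by
    have hsub1 : B * X11 = Y11 - Q * X21 := eq_sub_of_add_eq E11
    have hsub2 : B * X12 = Y12 - Q * X22 := eq_sub_of_add_eq E12
    have h1 : B * X' = B * X11 - (B * X12) * (N * X21) := by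
      rw [hX'def, Matrix.mul_sub, Matrix.mul_assoc]
    have h2 : (Q * X22) * (N * X21) = Q * X21 := by
      rw [Matrix.mul_assoc Q X22 (N * X21), ← Matrix.mul_assoc X22 N X21, hWN, Matrix.one_mul]
    rw [h1, hsub1, hsub2, Matrix.sub_mul, h2, hY'def]
    abel
  -- z2 in terms of x2
  have hz2eq : (z ∘ c') = N *ᵥ (x ∘ c') - (N * X21) *ᵥ (z ∘ c) := by
    have h := congrArg (fun v => N *ᵥ v) V2
    simp only [Matrix.mulVec_add, Matrix.mulVec_mulVec, hNW, Matrix.one_mulVec] at h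
    exact eq_sub_of_add_eq' h
  have hkey : (z ∘ c') + (N * X21) *ᵥ (z ∘ c) = N *ᵥ (x ∘ c') := by
    rw [hz2eq]; abel
  -- X' *ᵥ z1
  have hX'z1 : X' *ᵥ (z ∘ c) = (x ∘ c) - X12 *ᵥ (N *ᵥ (x ∘ c')) := by
    rw [hX'def, Matrix.sub_mulVec]
    have h1 : X11 *ᵥ (z ∘ c) = (x ∘ c) - X12 *ᵥ (z ∘ c') := eq_sub_of_add_eq V1
    have h2 : (X12 * (N * X21)) *ᵥ (z ∘ c) = X12 *ᵥ ((N * X21) *ᵥ (z ∘ c)) :=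
      (Matrix.mulVec_mulVec _ _ _).symm
    rw [h1, h2, ← hkey, Matrix.mulVec_add]
    abel
  have hNx2nn : ∀ j, 0 ≤ (N *ᵥ (x ∘ c')) j :=
    hz_mulVec_nonneg hNnn (fun j => (hx _).le)
  have hX'z1pos : ∀ i, 0 < (X' *ᵥ (z ∘ c)) i := by
    intro i
    rw [hX'z1]
    have h4 : (X12 *ᵥ (N *ᵥ (x ∘ c'))) i ≤ 0 := hz_mulVec_nonpos hX12np hNx2nn i
    have h5 : 0 < x (c i) := hx _
    simp only [Pi.sub_apply]
    have : (x ∘ c) i = x (c i) := rfl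
    linarith
  -- X' is an M-matrix; build r'
  obtain ⟨hX'det, hMnn⟩ := hz_M_inverse X' hX'Z (z ∘ c) hz1nn hX'z1pos
  set r' : {x : Fin n // x ∈ β} → ℝ := (fun _ => (1:ℝ)) ᵥ* X'⁻¹ with hr'def
  have hr'nn : ∀ j, 0 ≤ r' j := by
    intro j
    rw [hr'def]
    simp only [Matrix.vecMul, dotProduct]
    exact Finset.sum_nonneg fun i _ => by simpa using hMnn i j
  have hr'X' : r' ᵥ* X' = fun _ => (1:ℝ) := by
    rw [hr'def, Matrix.vecMul_vecMul, Matrix.nonsing_inv_mul _ hX'det, Matrix.vecMul_one]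
  constructor
  · exact ⟨X', Y', r', 0, hX'Z, hY'Z, hBX', hr'nn, fun i => le_refl 0, by
      intro j
      rw [Matrix.zero_vecMul, hr'X']
      simp⟩
  · refine ⟨X' *ᵥ (z ∘ c), hX'z1pos, ?_⟩
    intro i
    have hBy : B *ᵥ (X' *ᵥ (z ∘ c)) = Y' *ᵥ (z ∘ c) := by
      rw [Matrix.mulVec_mulVec, hBX']
    have hY'z1 : Y' *ᵥ (z ∘ c) = ((A *ᵥ x) ∘ c) - Y12 *ᵥ (N *ᵥ (x ∘ c')) := by
      rw [hY'def, Matrix.sub_mulVec]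
      have h1 : Y11 *ᵥ (z ∘ c) = ((A *ᵥ x) ∘ c) - Y12 *ᵥ (z ∘ c') := eq_sub_of_add_eq V1Y
      have h2 : (Y12 * (N * X21)) *ᵥ (z ∘ c) = Y12 *ᵥ ((N * X21) *ᵥ (z ∘ c)) :=
        (Matrix.mulVec_mulVec _ _ _).symm
      rw [h1, h2, ← hkey, Matrix.mulVec_add]
      abel
    show 0 ≤ (B *ᵥ (X' *ᵥ (z ∘ c))) i
    rw [hBy, hY'z1]
    have h4 : (Y12 *ᵥ (N *ᵥ (x ∘ c'))) i ≤ 0 := hz_mulVec_nonpos hY12np hNx2nn i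
    have h5 : 0 ≤ (A *ᵥ x) (c i) := hAx _
    simp only [Pi.sub_apply]
    have : ((A *ᵥ x) ∘ c) i = (A *ᵥ x) (c i) := rfl
    linarith
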